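/- Let H be a weak bialgebra. Then H_t is a separable Frobenius k-algebra: e_t = ε_t(1_{(1)}) ⊗ 1_{(2)} is a separability idempotent for H_t, and (e_t, ε|_{H_t}) is a Frobenius system. In particular zε_t(1_{(1)}) ⊗ 1_{(2)} = ε_t(1_{(1)}) ⊗ 1_{(2)}z for all z ∈ H_t. -/
import Mathlib


open TensorProduct

structure WeakBialgebra (k H : Type*) [CommRing k] [Ring H] [Algebra k H] where
  comul : H →ₗ[k] H ⊗[k] H
  counit : H →ₗ[k] k
  coassoc : ∀ h : H, (TensorProduct.assoc k H H H) ((comul.rTensor H) (comul h)) =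
      (comul.lTensor H) (comul h)
  counit_left : ∀ h : H, (TensorProduct.lid k H) ((counit.rTensor H) (comul h)) = h
  counit_right : ∀ h : H, (TensorProduct.rid k H) ((counit.lTensor H) (comul h)) = h
  comul_mul : ∀ h g : H, comul (h * g) = comul h * comul g
  weak_unit_left : (comul.lTensor H) (comul 1) =
      (Algebra.TensorProduct.map (AlgHom.id k H)
        (Algebra.TensorProduct.includeLeft : H →ₐ[k] H ⊗[k] H)) (comul 1) *
      (Algebra.TensorProduct.includeRight : (H ⊗[k] H) →ₐ[k] H ⊗[k] (H ⊗[k] H)) (comul 1)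
  weak_unit_right : (comul.lTensor H) (comul 1) =
      (Algebra.TensorProduct.includeRight : (H ⊗[k] H) →ₐ[k] H ⊗[k] (H ⊗[k] H)) (comul 1) *
      (Algebra.TensorProduct.map (AlgHom.id k H)
        (Algebra.TensorProduct.includeLeft : H →ₐ[k] H ⊗[k] H)) (comul 1)
  weak_counit₁ : ∀ h g l : H, counit (h * g * l) =
      (LinearMap.mul' k k) ((TensorProduct.map counit counit)
        ((h ⊗ₜ[k] (1 : H)) * comul g * ((1 : H) ⊗ₜ[k] l)))
  weak_counit₂ : ∀ h g l : H, counit (h * g * l) =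
      (LinearMap.mul' k k) ((TensorProduct.map counit counit)
        ((h ⊗ₜ[k] (1 : H)) * (TensorProduct.comm k H H) (comul g) * ((1 : H) ⊗ₜ[k] l)))

namespace WeakBialgebra

variable {k H : Type*} [CommRing k] [Ring H] [Algebra k H] (W : WeakBialgebra k H)

/-- The target map `ε_t(h) = ε(1_{(1)}h)1_{(2)}`. -/
noncomputable def εt : H →ₗ[k] H :=
  (TensorProduct.lid k H).toLinearMap ∘ₗ (W.counit.rTensor H) ∘ₗ
    (LinearMap.mulLeft k (W.comul 1)) ∘ₗ
    (Algebra.TensorProduct.includeLeft : H →ₐ[k] H ⊗[k] H).toLinearMap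

/-- The source map `ε_s(h) = 1_{(1)}ε(h1_{(2)})`. -/
noncomputable def εs : H →ₗ[k] H :=
  (TensorProduct.rid k H).toLinearMap ∘ₗ (W.counit.lTensor H) ∘ₗ
    (LinearMap.mulRight k (W.comul 1)) ∘ₗ
    (Algebra.TensorProduct.includeRight : H →ₐ[k] H ⊗[k] H).toLinearMap

/-- `ε̄_t(h) = ε(h1_{(1)})1_{(2)}`. -/
noncomputable def εt' : H →ₗ[k] H :=
  (TensorProduct.lid k H).toLinearMap ∘ₗ (W.counit.rTensor H) ∘ₗ
    (LinearMap.mulRight k (W.comul 1)) ∘ₗ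
    (Algebra.TensorProduct.includeLeft : H →ₐ[k] H ⊗[k] H).toLinearMap

/-- `ε̄_s(h) = ε(1_{(2)}h)1_{(1)}`. -/
noncomputable def εs' : H →ₗ[k] H :=
  (TensorProduct.rid k H).toLinearMap ∘ₗ (W.counit.lTensor H) ∘ₗ
    (LinearMap.mulLeft k (W.comul 1)) ∘ₗ
    (Algebra.TensorProduct.includeRight : H →ₐ[k] H ⊗[k] H).toLinearMap

end WeakBialgebra

/-- A weak Hopf algebra: a weak bialgebra with an antipode. -/
structure WeakHopf (k H : Type*) [CommRing k] [Ring H] [Algebra k H] where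
  W : WeakBialgebra k H
  S : H →ₗ[k] H
  S_conv_id : ∀ h : H, (LinearMap.mul' k H) ((S.rTensor H) (W.comul h)) = W.εs h
  id_conv_S : ∀ h : H, (LinearMap.mul' k H) ((S.lTensor H) (W.comul h)) = W.εt h
  S_conv_id_conv_S : ∀ h : H, (LinearMap.mul' k H) ((LinearMap.lTensor H (LinearMap.mul' k H))
      ((TensorProduct.map S (TensorProduct.map LinearMap.id S))
        ((W.comul.lTensor H) (W.comul h)))) = S h

section Aux

namespace WeakBialgebra

variable {k H : Type*} [CommRing k] [Ring H] [Algebra k H] (W : WeakBialgebra k H)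

lemma εt_apply (h : H) :
    W.εt h = TensorProduct.lid k H ((W.counit.rTensor H) (W.comul 1 * (h ⊗ₜ[k] 1))) := rfl

lemma εt_sum {S : Finset (H × H)} (hS : W.comul 1 = ∑ p ∈ S, p.1 ⊗ₜ[k] p.2) (u : H) :
    W.εt u = ∑ p ∈ S, W.counit (p.1 * u) • p.2 := by
  rw [εt_apply]
  conv_lhs => rw [hS]
  rw [Finset.sum_mul]
  simp [Algebra.TensorProduct.tmul_mul_tmul]

lemma E_idem : W.comul 1 * W.comul 1 = W.comul 1 := by
  rw [← W.comul_mul, one_mul]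

lemma wunit_right_sum {S : Finset (H × H)} (hS : W.comul 1 = ∑ p ∈ S, p.1 ⊗ₜ[k] p.2) :
    ∑ p ∈ S, p.1 ⊗ₜ[k] (W.comul p.2) =
      ∑ p ∈ S, p.1 ⊗ₜ[k] (W.comul 1 * (p.2 ⊗ₜ[k] (1 : H))) := by
  calc ∑ p ∈ S, p.1 ⊗ₜ[k] (W.comul p.2) = (W.comul.lTensor H) (W.comul 1) := by
        conv_rhs => rw [hS]
        simp [map_sum]
    _ = (Algebra.TensorProduct.includeRight : (H ⊗[k] H) →ₐ[k] H ⊗[k] (H ⊗[k] H)) (W.comul 1) *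
        (Algebra.TensorProduct.map (AlgHom.id k H)
          (Algebra.TensorProduct.includeLeft : H →ₐ[k] H ⊗[k] H)) (W.comul 1) :=
          W.weak_unit_right
    _ = ((1 : H) ⊗ₜ[k] W.comul 1) * ∑ p ∈ S, p.1 ⊗ₜ[k] (p.2 ⊗ₜ[k] (1 : H)) := by
        rw [Algebra.TensorProduct.includeRight_apply]
        congr 1
        conv_lhs => rw [hS]
        simp [map_sum]
    _ = ∑ p ∈ S, p.1 ⊗ₜ[k] (W.comul 1 * (p.2 ⊗ₜ[k] (1 : H))) := by
        rw [Finset.mul_sum]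
        simp [Algebra.TensorProduct.tmul_mul_tmul]

lemma wunit_left_sum {S : Finset (H × H)} (hS : W.comul 1 = ∑ p ∈ S, p.1 ⊗ₜ[k] p.2) :
    ∑ p ∈ S, p.1 ⊗ₜ[k] (W.comul p.2) =
      ∑ p ∈ S, p.1 ⊗ₜ[k] ((p.2 ⊗ₜ[k] (1 : H)) * W.comul 1) := by
  calc ∑ p ∈ S, p.1 ⊗ₜ[k] (W.comul p.2) = (W.comul.lTensor H) (W.comul 1) := by
        conv_rhs => rw [hS]
        simp [map_sum]
    _ = (Algebra.TensorProduct.map (AlgHom.id k H)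
          (Algebra.TensorProduct.includeLeft : H →ₐ[k] H ⊗[k] H)) (W.comul 1) *
        (Algebra.TensorProduct.includeRight : (H ⊗[k] H) →ₐ[k] H ⊗[k] (H ⊗[k] H)) (W.comul 1) :=
          W.weak_unit_left
    _ = (∑ p ∈ S, p.1 ⊗ₜ[k] (p.2 ⊗ₜ[k] (1 : H))) * ((1 : H) ⊗ₜ[k] W.comul 1) := by
        rw [Algebra.TensorProduct.includeRight_apply]
        congr 1
        conv_lhs => rw [hS]
        simp [map_sum]
    _ = ∑ p ∈ S, p.1 ⊗ₜ[k] ((p.2 ⊗ₜ[k] (1 : H)) * W.comul 1) := by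
        rw [Finset.sum_mul]
        simp [Algebra.TensorProduct.tmul_mul_tmul]

end WeakBialgebra

end Aux
section Aux2

namespace WeakBialgebra

variable {k H : Type*} [CommRing k] [Ring H] [Algebra k H] (W : WeakBialgebra k H)

lemma sum_tmul_εt {S : Finset (H × H)} (hS : W.comul 1 = ∑ p ∈ S, p.1 ⊗ₜ[k] p.2) :
    ∑ p ∈ S, p.1 ⊗ₜ[k] W.εt p.2 = W.comul 1 := by
  have key := congrArg
    (LinearMap.lTensor H ((TensorProduct.lid k H).toLinearMap ∘ₗ W.counit.rTensor H))
    (W.wunit_right_sum hS)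
  simp only [map_sum, LinearMap.lTensor_tmul, LinearMap.coe_comp, LinearEquiv.coe_coe,
    Function.comp_apply] at key
  calc ∑ p ∈ S, p.1 ⊗ₜ[k] W.εt p.2
      = ∑ p ∈ S, p.1 ⊗ₜ[k]
          (TensorProduct.lid k H ((W.counit.rTensor H) (W.comul 1 * (p.2 ⊗ₜ[k] 1)))) := by
        simp only [εt_apply]
    _ = ∑ p ∈ S, p.1 ⊗ₜ[k] (TensorProduct.lid k H ((W.counit.rTensor H) (W.comul p.2))) :=
        key.symm
    _ = ∑ p ∈ S, p.1 ⊗ₜ[k] p.2 := by simp [W.counit_left]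
    _ = W.comul 1 := hS.symm

lemma lTensor_εt_E : (W.εt).lTensor H (W.comul 1) = W.comul 1 := by
  obtain ⟨S, hS⟩ := TensorProduct.exists_finset (W.comul 1)
  conv_lhs => rw [hS]
  rw [map_sum]
  simp only [LinearMap.lTensor_tmul]
  exact W.sum_tmul_εt hS

lemma comul_εt_left (h : H) :
    W.comul (W.εt h) = (W.εt h ⊗ₜ[k] (1 : H)) * W.comul 1 := by
  obtain ⟨S, hS⟩ := TensorProduct.exists_finset (W.comul 1)
  have key := congrArg
    ((TensorProduct.lid k (H ⊗[k] H)).toLinearMap ∘ₗ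
      LinearMap.rTensor (H ⊗[k] H) (W.counit ∘ₗ LinearMap.mulRight k h))
    (W.wunit_left_sum hS)
  simp only [map_sum, LinearMap.rTensor_tmul, LinearMap.coe_comp, LinearEquiv.coe_coe,
    Function.comp_apply, LinearMap.mulRight_apply, TensorProduct.lid_tmul] at key
  -- key : ∑ p ∈ S, ε(p.1*h) • W.comul p.2 = ∑ p ∈ S, ε(p.1*h) • ((p.2 ⊗ₜ 1) * W.comul 1)
  calc W.comul (W.εt h) = ∑ p ∈ S, W.counit (p.1 * h) • W.comul p.2 := by
        rw [W.εt_sum hS, map_sum]; simp only [map_smul]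
    _ = ∑ p ∈ S, W.counit (p.1 * h) • ((p.2 ⊗ₜ[k] (1 : H)) * W.comul 1) := key
    _ = (W.εt h ⊗ₜ[k] (1 : H)) * W.comul 1 := by
        rw [W.εt_sum hS, TensorProduct.sum_tmul, Finset.sum_mul]
        simp [← TensorProduct.smul_tmul', smul_mul_assoc]

lemma comul_εt_right (h : H) :
    W.comul (W.εt h) = W.comul 1 * (W.εt h ⊗ₜ[k] (1 : H)) := by
  obtain ⟨S, hS⟩ := TensorProduct.exists_finset (W.comul 1)
  have key := congrArg
    ((TensorProduct.lid k (H ⊗[k] H)).toLinearMap ∘ₗ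
      LinearMap.rTensor (H ⊗[k] H) (W.counit ∘ₗ LinearMap.mulRight k h))
    (W.wunit_right_sum hS)
  simp only [map_sum, LinearMap.rTensor_tmul, LinearMap.coe_comp, LinearEquiv.coe_coe,
    Function.comp_apply, LinearMap.mulRight_apply, TensorProduct.lid_tmul] at key
  calc W.comul (W.εt h) = ∑ p ∈ S, W.counit (p.1 * h) • W.comul p.2 := by
        rw [W.εt_sum hS, map_sum]; simp only [map_smul]
    _ = ∑ p ∈ S, W.counit (p.1 * h) • (W.comul 1 * (p.2 ⊗ₜ[k] (1 : H))) := key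
    _ = W.comul 1 * (W.εt h ⊗ₜ[k] (1 : H)) := by
        rw [W.εt_sum hS, TensorProduct.sum_tmul, Finset.mul_sum]
        simp [← TensorProduct.smul_tmul', mul_smul_comm]

lemma εt_one : W.εt 1 = 1 := by
  rw [εt_apply, ← Algebra.TensorProduct.one_def, mul_one]
  exact W.counit_left 1

end WeakBialgebra

end Aux2
section Aux3

namespace WeakBialgebra

variable {k H : Type*} [CommRing k] [Ring H] [Algebra k H] (W : WeakBialgebra k H)

lemma sum_smul_fst {S : Finset (H × H)} (hS : W.comul 1 = ∑ p ∈ S, p.1 ⊗ₜ[k] p.2) :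
    ∑ p ∈ S, W.counit p.2 • p.1 = 1 := by
  have h1 := W.counit_right 1
  rw [hS] at h1
  simpa using h1

lemma sum_counit_smul_snd {S : Finset (H × H)} (hS : W.comul 1 = ∑ p ∈ S, p.1 ⊗ₜ[k] p.2) :
    ∑ p ∈ S, W.counit p.1 • p.2 = 1 := by
  have h1 := W.counit_left 1
  rw [hS] at h1
  simpa using h1

lemma counit_εt (h : H) : W.counit (W.εt h) = W.counit h := by
  obtain ⟨S, hS⟩ := TensorProduct.exists_finset (W.comul 1)
  have u1 := W.sum_smul_fst hS
  have h2 : W.counit h = W.counit ((∑ p ∈ S, W.counit p.2 • p.1) * h) := by rw [u1, one_mul]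
  rw [h2, Finset.sum_mul, map_sum, W.εt_sum hS, map_sum]
  simp [smul_mul_assoc, smul_eq_mul, mul_comm]

lemma counit_mul_εt (x q : H) : W.counit (x * W.εt q) = W.counit (x * q) := by
  obtain ⟨S, hS⟩ := TensorProduct.exists_finset (W.comul 1)
  have wc := W.weak_counit₂ x 1 q
  rw [mul_one] at wc
  rw [hS] at wc
  simp only [map_sum, TensorProduct.comm_tmul, Finset.sum_mul, Finset.mul_sum,
    Algebra.TensorProduct.tmul_mul_tmul, TensorProduct.map_tmul, LinearMap.mul'_apply,
    one_mul, mul_one] at wc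
  rw [W.εt_sum hS, Finset.mul_sum, map_sum, wc]
  simp [mul_smul_comm, smul_eq_mul, mul_comm]

lemma εt_mul_εt_arg (x y : H) : W.εt (x * W.εt y) = W.εt (x * y) := by
  obtain ⟨S, hS⟩ := TensorProduct.exists_finset (W.comul 1)
  rw [W.εt_sum hS (x * W.εt y), W.εt_sum hS (x * y)]
  refine Finset.sum_congr rfl fun p _ => ?_
  rw [← mul_assoc, W.counit_mul_εt (p.1 * x) y, mul_assoc]

lemma εt_closure (h g : H) : W.εt (W.εt h * W.εt g) = W.εt h * W.εt g := by
  have key : W.comul (W.εt h * W.εt g) =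
      W.comul 1 * ((W.εt h * W.εt g) ⊗ₜ[k] (1 : H)) := by
    calc W.comul (W.εt h * W.εt g) = W.comul (W.εt h) * W.comul (W.εt g) :=
          W.comul_mul _ _
      _ = ((W.εt h ⊗ₜ[k] (1:H)) * W.comul 1) * (W.comul 1 * (W.εt g ⊗ₜ[k] (1:H))) := by
          rw [← W.comul_εt_left h, ← W.comul_εt_right g]
      _ = (W.εt h ⊗ₜ[k] (1:H)) * (W.comul 1 * W.comul 1) * (W.εt g ⊗ₜ[k] (1:H)) := by
          rw [mul_assoc, mul_assoc, mul_assoc]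
      _ = ((W.εt h ⊗ₜ[k] (1:H)) * W.comul 1) * (W.εt g ⊗ₜ[k] (1:H)) := by
          rw [W.E_idem, mul_assoc]
      _ = (W.comul 1 * (W.εt h ⊗ₜ[k] (1:H))) * (W.εt g ⊗ₜ[k] (1:H)) := by
          rw [← W.comul_εt_left h, W.comul_εt_right h]
      _ = W.comul 1 * ((W.εt h * W.εt g) ⊗ₜ[k] (1 : H)) := by
          rw [mul_assoc, Algebra.TensorProduct.tmul_mul_tmul, mul_one]
  rw [εt_apply, ← key]
  exact W.counit_left _

lemma εt_εt_mul (h g : H) : W.εt (W.εt h * g) = W.εt h * W.εt g := by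
  have h1 := W.εt_mul_εt_arg (W.εt h) g
  rw [← h1, W.εt_closure h g]

end WeakBialgebra

end Aux3
section Aux4

namespace WeakBialgebra

variable {k H : Type*} [CommRing k] [Ring H] [Algebra k H] (W : WeakBialgebra k H)

lemma εt_D7 (h g : H) :
    TensorProduct.lid k H ((W.counit.rTensor H)
      ((W.εt h ⊗ₜ[k] (1:H)) * W.comul 1 * (g ⊗ₜ[k] (1:H)))) = W.εt (W.εt h * g) := by
  obtain ⟨S, hS⟩ := TensorProduct.exists_finset (W.comul 1)
  have step1 : ∀ x : H, W.counit (x * W.εt h * g)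
      = ∑ q ∈ S, W.counit (x * q.2) * W.counit (W.εt h * q.1 * g) := by
    intro x
    have wc := W.weak_counit₂ x (W.εt h) g
    rw [W.comul_εt_left h, hS] at wc
    simp only [map_sum, Algebra.TensorProduct.tmul_mul_tmul, TensorProduct.comm_tmul,
      Finset.sum_mul, Finset.mul_sum, TensorProduct.map_tmul, LinearMap.mul'_apply,
      one_mul, mul_one] at wc
    exact wc
  have key : W.εt (W.εt h * g) = ∑ q ∈ S, W.counit (W.εt h * q.1 * g) • W.εt q.2 := by
    rw [W.εt_sum hS]
    calc ∑ p ∈ S, W.counit (p.1 * (W.εt h * g)) • p.2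
        = ∑ p ∈ S, (∑ q ∈ S, W.counit (p.1 * q.2) * W.counit (W.εt h * q.1 * g)) • p.2 := by
          refine Finset.sum_congr rfl fun p _ => ?_
          rw [← mul_assoc, step1 p.1]
      _ = ∑ q ∈ S, W.counit (W.εt h * q.1 * g) • ∑ p ∈ S, W.counit (p.1 * q.2) • p.2 := by
          simp only [Finset.sum_smul, Finset.smul_sum]
          rw [Finset.sum_comm]
          refine Finset.sum_congr rfl fun q _ => Finset.sum_congr rfl fun p _ => ?_
          rw [mul_comm, mul_smul]
      _ = ∑ q ∈ S, W.counit (W.εt h * q.1 * g) • W.εt q.2 := by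
          refine Finset.sum_congr rfl fun q _ => ?_
          rw [W.εt_sum hS q.2]
  have repl := congrArg (fun t => (TensorProduct.lid k H) ((LinearMap.rTensor H
      (W.counit ∘ₗ LinearMap.mulRight k g ∘ₗ LinearMap.mulLeft k (W.εt h))) t))
    (W.sum_tmul_εt hS)
  rw [hS] at repl
  simp only [map_sum, LinearMap.rTensor_tmul, LinearMap.coe_comp, Function.comp_apply,
    LinearMap.mulLeft_apply, LinearMap.mulRight_apply, TensorProduct.lid_tmul] at repl
  -- repl : ∑ q ∈ S, ε(εt h * q.1 * g) • εt q.2 = ∑ q ∈ S, ε(εt h * q.1 * g) • q.2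
  rw [key, repl]
  conv_lhs => rw [hS]
  simp only [Finset.mul_sum, Finset.sum_mul, Algebra.TensorProduct.tmul_mul_tmul,
    map_sum, LinearMap.rTensor_tmul, TensorProduct.lid_tmul, one_mul, mul_one]

end WeakBialgebra

end Aux4
section Aux5

namespace WeakBialgebra

variable {k H : Type*} [CommRing k] [Ring H] [Algebra k H] (W : WeakBialgebra k H)

lemma εt_R1 (h : H) :
    LinearMap.rTensor H (W.εt ∘ₗ LinearMap.mulRight k h) (W.comul 1)
      = TensorProduct.map W.εt (W.εt ∘ₗ LinearMap.mulRight k h ∘ₗ W.εt) (W.comul 1) := by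
  obtain ⟨S, hS⟩ := TensorProduct.exists_finset (W.comul 1)
  set f_h : H →ₗ[k] k := W.counit ∘ₗ LinearMap.mulRight k h with hf
  set g₁ : H ⊗[k] H →ₗ[k] H :=
    (TensorProduct.rid k H).toLinearMap ∘ₗ TensorProduct.map W.εt f_h with hg₁
  have g₁_apply : ∀ (u y : H), g₁ (u ⊗ₜ[k] y) = W.counit (y * h) • W.εt u := by
    intro u y
    simp [hg₁, hf, TensorProduct.rid_tmul]
  have g₁Δ : ∀ x : H, g₁ (W.comul x) = W.εt (x * h) := by
    intro x
    have hΞ : g₁ = ∑ v ∈ S, ((LinearMap.mul' k k) ∘ₗ TensorProduct.map W.counit W.counit ∘ₗ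
        LinearMap.mulRight k ((1:H) ⊗ₜ[k] h) ∘ₗ
        LinearMap.mulLeft k (v.1 ⊗ₜ[k] (1:H))).smulRight v.2 := by
      apply TensorProduct.ext'
      intro u y
      rw [g₁_apply]
      simp only [LinearMap.sum_apply, LinearMap.smulRight_apply, LinearMap.coe_comp,
        Function.comp_apply, LinearMap.mulLeft_apply, LinearMap.mulRight_apply,
        Algebra.TensorProduct.tmul_mul_tmul, TensorProduct.map_tmul, LinearMap.mul'_apply,
        one_mul, mul_one]
      rw [W.εt_sum hS u, Finset.smul_sum]
      refine Finset.sum_congr rfl fun v _ => ?_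
      rw [smul_smul, mul_comm]
    rw [hΞ]
    simp only [LinearMap.sum_apply, LinearMap.smulRight_apply, LinearMap.coe_comp,
      Function.comp_apply, LinearMap.mulLeft_apply, LinearMap.mulRight_apply]
    rw [W.εt_sum hS (x * h)]
    refine Finset.sum_congr rfl fun v _ => ?_
    rw [← W.weak_counit₁ v.1 x h, mul_assoc]
  have hX : (W.comul.rTensor H) (W.comul 1) = ∑ p ∈ S, (W.comul p.1) ⊗ₜ[k] p.2 := by
    conv_lhs => rw [hS]
    simp [map_sum]
  have hX2 : (W.comul.rTensor H) (W.comul 1)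
      = ∑ p ∈ S, ∑ q ∈ S, (p.1 ⊗ₜ[k] (p.2 * q.1)) ⊗ₜ[k] q.2 := by
    have hc := W.coassoc 1
    have h3 : (W.comul.lTensor H) (W.comul 1)
        = ∑ p ∈ S, p.1 ⊗ₜ[k] ((p.2 ⊗ₜ[k] (1:H)) * W.comul 1) := by
      have h4 : (W.comul.lTensor H) (W.comul 1) = ∑ p ∈ S, p.1 ⊗ₜ[k] (W.comul p.2) := by
        conv_lhs => rw [hS]
        simp [map_sum]
      rw [h4]
      exact W.wunit_left_sum hS
    rw [h3] at hc
    have h5 := congrArg (TensorProduct.assoc k H H H).symm hc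
    rw [LinearEquiv.symm_apply_apply] at h5
    rw [h5]
    conv_lhs => rw [hS]
    simp only [Finset.mul_sum, Algebra.TensorProduct.tmul_mul_tmul, one_mul,
      TensorProduct.tmul_sum, map_sum, TensorProduct.assoc_symm_tmul]
  have hA := congrArg (LinearMap.rTensor H g₁) hX
  have hB := congrArg (LinearMap.rTensor H g₁) hX2
  simp only [map_sum, LinearMap.rTensor_tmul] at hA hB
  -- hA : Γ X = ∑ p, g₁ (comul p.1) ⊗ p.2 ; hB : Γ X = ∑∑ g₁ (p.1 ⊗ (p.2*q.1)) ⊗ q.2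
  have sA : ∑ p ∈ S, W.εt (p.1 * h) ⊗ₜ[k] p.2
      = ∑ p ∈ S, ∑ q ∈ S, W.counit (p.2 * q.1 * h) • (W.εt p.1 ⊗ₜ[k] q.2) := by
    calc ∑ p ∈ S, W.εt (p.1 * h) ⊗ₜ[k] p.2
        = ∑ p ∈ S, g₁ (W.comul p.1) ⊗ₜ[k] p.2 := by
          refine Finset.sum_congr rfl fun p _ => ?_
          rw [g₁Δ p.1]
      _ = ∑ p ∈ S, ∑ q ∈ S, g₁ (p.1 ⊗ₜ[k] (p.2 * q.1)) ⊗ₜ[k] q.2 := hA.symm.trans hB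
      _ = ∑ p ∈ S, ∑ q ∈ S, W.counit (p.2 * q.1 * h) • (W.εt p.1 ⊗ₜ[k] q.2) := by
          refine Finset.sum_congr rfl fun p _ => Finset.sum_congr rfl fun q _ => ?_
          rw [g₁_apply, TensorProduct.smul_tmul', mul_assoc]
  -- N : H →ₗ H, v ↦ ∑ q, ε(v*q.1*h) • q.2
  set N : H →ₗ[k] H := (TensorProduct.lid k H).toLinearMap ∘ₗ W.counit.rTensor H ∘ₗ
      LinearMap.mulRight k (h ⊗ₜ[k] (1:H)) ∘ₗ LinearMap.mulRight k (W.comul 1) ∘ₗ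
      (Algebra.TensorProduct.includeLeft : H →ₐ[k] H ⊗[k] H).toLinearMap with hNdef
  have hN : ∀ v : H, N v = ∑ q ∈ S, W.counit (v * q.1 * h) • q.2 := by
    intro v
    simp only [hNdef, LinearMap.coe_comp, LinearEquiv.coe_coe, Function.comp_apply,
      AlgHom.toLinearMap_apply, Algebra.TensorProduct.includeLeft_apply,
      LinearMap.mulRight_apply]
    conv_lhs => rw [hS]
    simp only [Finset.mul_sum, Finset.sum_mul, Algebra.TensorProduct.tmul_mul_tmul,
      map_sum, LinearMap.rTensor_tmul, TensorProduct.lid_tmul, one_mul, mul_one]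
  have hN2 : ∀ x : H, N (W.εt x) = W.εt (W.εt x * h) := by
    intro x
    have := W.εt_D7 x h
    simp only [hNdef, LinearMap.coe_comp, LinearEquiv.coe_coe, Function.comp_apply,
      AlgHom.toLinearMap_apply, Algebra.TensorProduct.includeLeft_apply,
      LinearMap.mulRight_apply]
    exact this
  have repl2 := congrArg (TensorProduct.map W.εt N) (W.sum_tmul_εt hS)
  rw [hS] at repl2
  simp only [map_sum, TensorProduct.map_tmul] at repl2
  -- repl2 : ∑ p, εt p.1 ⊗ N (εt p.2) = ∑ p, εt p.1 ⊗ N p.2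
  calc LinearMap.rTensor H (W.εt ∘ₗ LinearMap.mulRight k h) (W.comul 1)
      = ∑ p ∈ S, W.εt (p.1 * h) ⊗ₜ[k] p.2 := by
        conv_lhs => rw [hS]
        simp [map_sum]
    _ = ∑ p ∈ S, ∑ q ∈ S, W.counit (p.2 * q.1 * h) • (W.εt p.1 ⊗ₜ[k] q.2) := sA
    _ = ∑ p ∈ S, W.εt p.1 ⊗ₜ[k] N p.2 := by
        refine Finset.sum_congr rfl fun p _ => ?_
        rw [hN p.2, TensorProduct.tmul_sum]
        refine Finset.sum_congr rfl fun q _ => ?_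
        rw [TensorProduct.tmul_smul]
    _ = ∑ p ∈ S, W.εt p.1 ⊗ₜ[k] N (W.εt p.2) := repl2.symm
    _ = TensorProduct.map W.εt (W.εt ∘ₗ LinearMap.mulRight k h ∘ₗ W.εt) (W.comul 1) := by
        conv_rhs => rw [hS]
        simp only [map_sum, TensorProduct.map_tmul, LinearMap.coe_comp, Function.comp_apply,
          LinearMap.mulRight_apply]
        refine Finset.sum_congr rfl fun p _ => ?_
        rw [hN2 p.2]

end WeakBialgebra

end Aux5
section Aux6

namespace WeakBialgebra

variable {k H : Type*} [CommRing k] [Ring H] [Algebra k H] (W : WeakBialgebra k H)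

lemma εt_commutation (h : H) :
    (W.εt h ⊗ₜ[k] (1:H)) * LinearMap.rTensor H W.εt (W.comul 1)
      = LinearMap.rTensor H W.εt (W.comul 1) * ((1:H) ⊗ₜ[k] W.εt h) := by
  obtain ⟨S, hS⟩ := TensorProduct.exists_finset (W.comul 1)
  have e_t : LinearMap.rTensor H W.εt (W.comul 1) = ∑ p ∈ S, W.εt p.1 ⊗ₜ[k] p.2 := by
    conv_lhs => rw [hS]
    simp [map_sum]
  calc (W.εt h ⊗ₜ[k] (1:H)) * LinearMap.rTensor H W.εt (W.comul 1)
      = ∑ p ∈ S, (W.εt h * W.εt p.1) ⊗ₜ[k] p.2 := by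
        rw [e_t, Finset.mul_sum]
        simp [Algebra.TensorProduct.tmul_mul_tmul]
    _ = ∑ p ∈ S, W.εt (W.εt h * p.1) ⊗ₜ[k] p.2 := by
        refine Finset.sum_congr rfl fun p _ => ?_
        rw [W.εt_εt_mul h p.1]
    _ = LinearMap.rTensor H W.εt ((W.εt h ⊗ₜ[k] (1:H)) * W.comul 1) := by
        conv_rhs => rw [hS]
        rw [Finset.mul_sum, map_sum]
        simp [Algebra.TensorProduct.tmul_mul_tmul]
    _ = LinearMap.rTensor H W.εt (W.comul 1 * (W.εt h ⊗ₜ[k] (1:H))) := by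
        rw [← W.comul_εt_left h, W.comul_εt_right h]
    _ = ∑ p ∈ S, W.εt (p.1 * W.εt h) ⊗ₜ[k] p.2 := by
        conv_lhs => rw [hS]
        rw [Finset.sum_mul, map_sum]
        simp [Algebra.TensorProduct.tmul_mul_tmul]
    _ = ∑ p ∈ S, W.εt (p.1 * h) ⊗ₜ[k] p.2 := by
        refine Finset.sum_congr rfl fun p _ => ?_
        rw [W.εt_mul_εt_arg p.1 h]
    _ = LinearMap.rTensor H (W.εt ∘ₗ LinearMap.mulRight k h) (W.comul 1) := by
        conv_rhs => rw [hS]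
        simp [map_sum]
    _ = TensorProduct.map W.εt (W.εt ∘ₗ LinearMap.mulRight k h ∘ₗ W.εt) (W.comul 1) :=
        W.εt_R1 h
    _ = ∑ p ∈ S, W.εt p.1 ⊗ₜ[k] W.εt (W.εt p.2 * h) := by
        conv_lhs => rw [hS]
        simp [map_sum]
    _ = ∑ p ∈ S, W.εt p.1 ⊗ₜ[k] (W.εt p.2 * W.εt h) := by
        refine Finset.sum_congr rfl fun p _ => ?_
        rw [W.εt_εt_mul p.2 h]
    _ = ∑ p ∈ S, W.εt p.1 ⊗ₜ[k] (p.2 * W.εt h) := by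
        have r3 := congrArg (TensorProduct.map W.εt (LinearMap.mulRight k (W.εt h)))
          (W.sum_tmul_εt hS)
        rw [hS] at r3
        simp only [map_sum, TensorProduct.map_tmul, LinearMap.mulRight_apply] at r3
        exact r3
    _ = LinearMap.rTensor H W.εt (W.comul 1) * ((1:H) ⊗ₜ[k] W.εt h) := by
        rw [e_t, Finset.sum_mul]
        simp [Algebra.TensorProduct.tmul_mul_tmul]

end WeakBialgebra

end Aux6

/-- `e_t = ε_t(1₍₁₎) ⊗ 1₍₂₎` is a separability idempotent for `H_t` and,
together with the restriction of the counit, a Frobenius system; in particular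
`z ε_t(1₍₁₎) ⊗ 1₍₂₎ = ε_t(1₍₁₎) ⊗ 1₍₂₎ z` for all `z ∈ H_t`. -/
theorem weakBialgebra_target_separable_frobenius
    {k H : Type*} [CommRing k] [Ring H] [Algebra k H] (W : WeakBialgebra k H) :
    (LinearMap.mul' k H) ((LinearMap.rTensor H W.εt) (W.comul 1)) = 1 ∧
    (∀ z ∈ Set.range W.εt,
      (z ⊗ₜ[k] (1 : H)) * (LinearMap.rTensor H W.εt) (W.comul 1) =
        (LinearMap.rTensor H W.εt) (W.comul 1) * ((1 : H) ⊗ₜ[k] z)) ∧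
    (TensorProduct.lid k H) ((W.counit.rTensor H) ((LinearMap.rTensor H W.εt) (W.comul 1))) = 1 ∧
    (TensorProduct.rid k H) ((W.counit.lTensor H) ((LinearMap.rTensor H W.εt) (W.comul 1))) = 1 ∧
    (LinearMap.rTensor H W.εt) (W.comul 1) ∈ LinearMap.range
      (TensorProduct.map (LinearMap.range W.εt).subtype (LinearMap.range W.εt).subtype) := by
  obtain ⟨S, hS⟩ := TensorProduct.exists_finset (W.comul 1)
  have e_t : LinearMap.rTensor H W.εt (W.comul 1) = ∑ p ∈ S, W.εt p.1 ⊗ₜ[k] p.2 := by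
    conv_lhs => rw [hS]
    simp [map_sum]
  refine ⟨?_, ?_, ?_, ?_, ?_⟩
  · -- separability: m(e_t) = 1
    have h2 := W.counit_left 1
    calc (LinearMap.mul' k H) ((LinearMap.rTensor H W.εt) (W.comul 1))
        = ∑ p ∈ S, W.εt p.1 * p.2 := by
          rw [e_t, map_sum]
          simp [LinearMap.mul'_apply]
      _ = ∑ p ∈ S, ∑ q ∈ S, W.counit (q.1 * p.1) • (q.2 * p.2) := by
          refine Finset.sum_congr rfl fun p _ => ?_
          rw [W.εt_sum hS p.1, Finset.sum_mul]
          simp [smul_mul_assoc]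
      _ = ∑ q ∈ S, ∑ p ∈ S, W.counit (q.1 * p.1) • (q.2 * p.2) := Finset.sum_comm
      _ = (TensorProduct.lid k H) ((W.counit.rTensor H) (W.comul 1 * W.comul 1)) := by
          rw [hS, Finset.sum_mul_sum]
          simp [Algebra.TensorProduct.tmul_mul_tmul, map_sum]
      _ = (TensorProduct.lid k H) ((W.counit.rTensor H) (W.comul 1)) := by rw [W.E_idem]
      _ = 1 := h2
  · rintro z ⟨h, rfl⟩
    exact W.εt_commutation h
  · calc (TensorProduct.lid k H) ((W.counit.rTensor H)
          ((LinearMap.rTensor H W.εt) (W.comul 1)))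
        = ∑ p ∈ S, W.counit (W.εt p.1) • p.2 := by
          rw [e_t]
          simp [map_sum]
      _ = ∑ p ∈ S, W.counit p.1 • p.2 := by
          refine Finset.sum_congr rfl fun p _ => ?_
          rw [W.counit_εt p.1]
      _ = 1 := W.sum_counit_smul_snd hS
  · calc (TensorProduct.rid k H) ((W.counit.lTensor H)
          ((LinearMap.rTensor H W.εt) (W.comul 1)))
        = ∑ p ∈ S, W.counit p.2 • W.εt p.1 := by
          rw [e_t]
          simp [map_sum]
      _ = W.εt (∑ p ∈ S, W.counit p.2 • p.1) := by
          rw [map_sum]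
          simp [map_smul]
      _ = W.εt 1 := by rw [W.sum_smul_fst hS]
      _ = 1 := W.εt_one
  · refine ⟨TensorProduct.map W.εt.rangeRestrict W.εt.rangeRestrict (W.comul 1), ?_⟩
    have hmap : TensorProduct.map (LinearMap.range W.εt).subtype (LinearMap.range W.εt).subtype
        ∘ₗ TensorProduct.map W.εt.rangeRestrict W.εt.rangeRestrict
        = TensorProduct.map W.εt W.εt := by
      rw [← TensorProduct.map_comp, LinearMap.subtype_comp_codRestrict]
    have : TensorProduct.map W.εt W.εt (W.comul 1)
        = LinearMap.rTensor H W.εt (W.comul 1) := by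
      have r4 := congrArg (LinearMap.rTensor H W.εt) (W.sum_tmul_εt hS)
      rw [hS] at r4
      simp only [map_sum, LinearMap.rTensor_tmul] at r4
      rw [e_t, ← r4]
      conv_lhs => rw [hS]
      simp [map_sum]
    rw [← this, ← hmap]
    rfl
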